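/- Let v₃ > 0 and 0 < λ < v₃/2, and let (y, z, θ) solve y' = cos θ, z' = sin θ, θ' = 2λ + v₃ cos θ with θ(0) = π and θ nonconstant. Set θ₁ = arccos(−2λ/v₃) ∈ (π/2, π). Then θ(s) ∈ (θ₁, 2π − θ₁) for all s, θ is strictly decreasing, cos θ(s) < 0 for all s, so y is strictly decreasing, the curve is a graph z = z(y), and this graph is convex: z''(y) = θ'(s)/cos³θ(s) > 0. -/

import Mathlib

open Real Set

private lemma stmt8_lip {lam v₃ : ℝ} (hv : 0 < v₃) :
    LipschitzWith v₃.toNNReal (fun x => 2*lam + v₃ * Real.cos x) := by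
  have hd : ∀ x : ℝ, HasDerivAt (fun x => 2*lam + v₃ * Real.cos x) (v₃ * (-Real.sin x)) x :=
    fun x => ((Real.hasDerivAt_cos x).const_mul v₃).const_add (2*lam)
  apply lipschitzWith_of_nnnorm_deriv_le (fun x => (hd x).differentiableAt)
  intro x
  rw [← NNReal.coe_le_coe, coe_nnnorm, (hd x).deriv, Real.coe_toNNReal _ hv.le,
    Real.norm_eq_abs, abs_mul, abs_neg, abs_of_pos hv]
  have h1 : |Real.sin x| ≤ 1 := abs_le.2 ⟨Real.neg_one_le_sin x, Real.sin_le_one x⟩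
  nlinarith [abs_nonneg (Real.sin x)]

private lemma stmt8_tan_lt {a b : ℝ} (ha : Real.pi/2 < a) (hab : a < b)
    (hb : b < 3*Real.pi/2) : Real.tan a < Real.tan b := by
  have h1 : Real.tan (a - Real.pi + Real.pi) = Real.tan (a - Real.pi) := Real.tan_add_pi _
  have h2 : Real.tan (b - Real.pi + Real.pi) = Real.tan (b - Real.pi) := Real.tan_add_pi _
  rw [sub_add_cancel] at h1 h2
  rw [h1, h2]
  exact Real.strictMonoOn_tan ⟨by linarith, by linarith⟩ ⟨by linarith, by linarith⟩
    (by linarith)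

theorem stmt8 (lam v₃ : ℝ) (hv : 0 < v₃) (hlam0 : 0 < lam) (hlam : lam < v₃ / 2)
    (y z θ : ℝ → ℝ)
    (hy : ∀ s, HasDerivAt y (Real.cos (θ s)) s)
    (hz : ∀ s, HasDerivAt z (Real.sin (θ s)) s)
    (hθ : ∀ s, HasDerivAt θ (2*lam + v₃ * Real.cos (θ s)) s)
    (hy0 : y 0 = 0) (hz0 : z 0 = 0) (hθ0 : θ 0 = Real.pi)
    (hnc : ∃ s, θ s ≠ Real.pi)
    (θ₁ : ℝ) (hθ₁ : θ₁ = Real.arccos (-(2*lam)/v₃)) :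
    (Real.pi/2 < θ₁ ∧ θ₁ < Real.pi) ∧
    (∀ s, θ₁ < θ s ∧ θ s < 2*Real.pi - θ₁) ∧
    StrictAnti θ ∧
    (∀ s, Real.cos (θ s) < 0) ∧
    StrictAnti y ∧
    (∀ s, 0 < (2*lam + v₃ * Real.cos (θ s)) / (Real.cos (θ s))^3) ∧
    (∃ g : ℝ → ℝ, (∀ s, z s = g (y s)) ∧ StrictConvexOn ℝ (Set.range y) g) := by
  have hc0 : -(2*lam)/v₃ < 0 := div_neg_of_neg_of_pos (by linarith) hv
  have hc1 : -1 < -(2*lam)/v₃ := by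
    have h1 : (2*lam)/v₃ < 1 := (div_lt_one hv).2 (by linarith)
    rw [neg_div]; linarith
  have hcos1 : Real.cos θ₁ = -(2*lam)/v₃ := by
    rw [hθ₁]; exact Real.cos_arccos (by linarith) (by linarith)
  have hπ2 : Real.pi/2 < θ₁ := by
    rw [hθ₁]
    by_contra h
    exact absurd (Real.arccos_le_pi_div_two.mp (not_lt.1 h)) (by linarith)
  have hθ₁π : θ₁ < Real.pi := by
    rcases lt_or_eq_of_le (hθ₁ ▸ Real.arccos_le_pi (-(2*lam)/v₃)) with h | h
    · exact h
    · exfalso; rw [h, Real.cos_pi] at hcos1; linarith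
  -- the RHS vanishes at θ₁ and 2π - θ₁
  have hw1 : 2*lam + v₃ * Real.cos θ₁ = 0 := by
    rw [hcos1]; field_simp; ring
  have hw2 : 2*lam + v₃ * Real.cos (2*Real.pi - θ₁) = 0 := by
    rw [Real.cos_two_pi_sub]; exact hw1
  have hθc : Continuous θ := continuous_iff_continuousAt.2 fun s => (hθ s).continuousAt
  -- uniqueness: θ never touches a stationary value ≠ π
  have hne : ∀ w, 2*lam + v₃ * Real.cos w = 0 → w ≠ Real.pi → ∀ s, θ s ≠ w := by
    intro w hw hwπ s hsw
    have hlip : ∀ t : ℝ, LipschitzOnWith v₃.toNNReal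
        (fun x => 2*lam + v₃ * Real.cos x) (univ : Set ℝ) :=
      fun _ => (stmt8_lip (lam := lam) hv).lipschitzOnWith
    have huniq := ODE_solution_unique_of_mem_Ioo
      (v := fun _ x => 2*lam + v₃ * Real.cos x) (s := fun _ => (univ : Set ℝ))
      (K := v₃.toNNReal) (f := θ) (g := fun _ => w) (t₀ := s)
      (a := min s 0 - 1) (b := max s 0 + 1) (fun t _ => hlip t)
      ⟨by linarith [min_le_left s 0], by linarith [le_max_left s 0]⟩
      (fun t _ => ⟨hθ t, trivial⟩)
      (fun t _ => ⟨by simpa [hw] using hasDerivAt_const t w, trivial⟩)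
      hsw
    have h0 : θ 0 = w :=
      huniq ⟨by linarith [min_le_right s 0], by linarith [le_max_right s 0]⟩
    exact hwπ (by rw [← h0, hθ0])
  have key : ∀ s, θ₁ < θ s ∧ θ s < 2*Real.pi - θ₁ := by
    intro s
    constructor
    · rcases lt_or_ge θ₁ (θ s) with h | h
      · exact h
      · exfalso
        have hmem : θ₁ ∈ uIcc (θ 0) (θ s) :=
          Set.mem_uIcc.2 (Or.inr ⟨h, by rw [hθ0]; exact hθ₁π.le⟩)
        obtain ⟨s', _, hs'⟩ := intermediate_value_uIcc (hθc.continuousOn) hmem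
        exact hne θ₁ hw1 (ne_of_lt hθ₁π) s' hs'
    · rcases lt_or_ge (θ s) (2*Real.pi - θ₁) with h | h
      · exact h
      · exfalso
        have hmem : 2*Real.pi - θ₁ ∈ uIcc (θ 0) (θ s) :=
          Set.mem_uIcc.2 (Or.inl ⟨by rw [hθ0]; linarith, h⟩)
        obtain ⟨s', _, hs'⟩ := intermediate_value_uIcc (hθc.continuousOn) hmem
        exact hne (2*Real.pi - θ₁) hw2 (fun h' => (ne_of_lt hθ₁π) (by linarith)) s' hs'
  -- cos is below cos θ₁ on the open arc
  have hcoslt : ∀ x, θ₁ < x → x < 2*Real.pi - θ₁ → Real.cos x < Real.cos θ₁ := by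
    have h0 : 0 ≤ θ₁ := hθ₁ ▸ Real.arccos_nonneg _
    intro x h1 h2
    rcases le_or_gt x Real.pi with h | h
    · exact Real.cos_lt_cos_of_nonneg_of_le_pi h0 h h1
    · have := Real.cos_lt_cos_of_nonneg_of_le_pi h0 (by linarith : 2*Real.pi - x ≤ Real.pi)
        (by linarith : θ₁ < 2*Real.pi - x)
      rwa [Real.cos_two_pi_sub] at this
  have hcosneg : ∀ s, Real.cos (θ s) < 0 := by
    intro s
    have := hcoslt _ (key s).1 (key s).2
    rw [hcos1] at this; linarith
  have hθ'neg : ∀ s, 2*lam + v₃ * Real.cos (θ s) < 0 := by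
    intro s
    have h := hcoslt _ (key s).1 (key s).2
    nlinarith
  have hθanti : StrictAnti θ :=
    strictAnti_of_deriv_neg fun s => by rw [(hθ s).deriv]; exact hθ'neg s
  have hyanti : StrictAnti y :=
    strictAnti_of_deriv_neg fun s => by rw [(hy s).deriv]; exact hcosneg s
  have hratio : ∀ s, 0 < (2*lam + v₃ * Real.cos (θ s)) / (Real.cos (θ s))^3 := by
    intro s
    have h3 : (Real.cos (θ s))^3 < 0 := Odd.pow_neg (by decide) (hcosneg s)
    exact div_pos_of_neg_of_neg (hθ'neg s) h3
  refine ⟨⟨hπ2, hθ₁π⟩, key, hθanti, hcosneg, hyanti, hratio, ?_⟩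
  -- the graph function
  have hyinj : Function.Injective y := hyanti.injective
  set g : ℝ → ℝ := fun t => z (Function.invFun y t) with hg
  have hgzy : ∀ s, g (y s) = z s := fun s => by
    simp only [hg]; rw [Function.leftInverse_invFun hyinj s]
  have hyc : Continuous y := continuous_iff_continuousAt.2 fun s => (hy s).continuousAt
  have hconn : OrdConnected (range y) := (isPreconnected_range hyc).ordConnected
  have hconv : Convex ℝ (range y) := hconn.convex
  -- slope = tan θ at intermediate point
  have slope_eq : ∀ a b : ℝ, a < b → ∃ ξ ∈ Ioo a b,
      (z b - z a) / (y b - y a) = Real.tan (θ ξ) := by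
    intro a b hab
    obtain ⟨ξ, hξ, heq⟩ := exists_ratio_hasDerivAt_eq_ratio_slope (f := z)
      (f' := fun s => Real.sin (θ s)) (g := y) (g' := fun s => Real.cos (θ s)) hab
      ((continuous_iff_continuousAt.2 fun s => (hz s).continuousAt).continuousOn)
      (fun s _ => hz s) (hyc.continuousOn) (fun s _ => hy s)
    refine ⟨ξ, hξ, ?_⟩
    have hyne : y b - y a ≠ 0 := sub_ne_zero.2 fun h => absurd (hyinj h) (ne_of_gt hab)
    have hcne : Real.cos (θ ξ) ≠ 0 := ne_of_lt (hcosneg ξ)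
    rw [Real.tan_eq_sin_div_cos, div_eq_div_iff hyne hcne]
    linear_combination -heq
  -- bounds for tan monotonicity
  have hrange : ∀ s, Real.pi/2 < θ s ∧ θ s < 3*Real.pi/2 := by
    intro s
    exact ⟨lt_trans hπ2 (key s).1, by linarith [(key s).2, hπ2]⟩
  refine ⟨g, fun s => (hgzy s).symm, ?_⟩
  apply strictConvexOn_of_slope_strict_mono_adjacent hconv
  intro p q r hp hr hpq hqr
  have hq : q ∈ range y := hconn.out hp hr ⟨hpq.le, hqr.le⟩
  obtain ⟨s₃, hs₃⟩ := hp
  obtain ⟨s₂, hs₂⟩ := hq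
  obtain ⟨s₁, hs₁⟩ := hr
  subst hs₁; subst hs₂; subst hs₃
  have h12 : s₁ < s₂ := hyanti.lt_iff_gt.1 hqr
  have h23 : s₂ < s₃ := hyanti.lt_iff_gt.1 hpq
  obtain ⟨ξ₁, hξ₁, e₁⟩ := slope_eq s₁ s₂ h12
  obtain ⟨ξ₂, hξ₂, e₂⟩ := slope_eq s₂ s₃ h23
  have htan : Real.tan (θ ξ₂) < Real.tan (θ ξ₁) :=
    stmt8_tan_lt (hrange ξ₂).1 (hθanti (lt_trans hξ₁.2 hξ₂.1)) (hrange ξ₁).2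
  rw [hgzy, hgzy, hgzy]
  have eq1 : (z (s₁) - z (s₂)) / (y s₁ - y s₂) = Real.tan (θ ξ₁) := by
    rw [show z s₁ - z s₂ = -(z s₂ - z s₁) by ring, show y s₁ - y s₂ = -(y s₂ - y s₁) by ring,
      neg_div_neg_eq]
    exact e₁
  have eq2 : (z (s₂) - z (s₃)) / (y s₂ - y s₃) = Real.tan (θ ξ₂) := by
    rw [show z s₂ - z s₃ = -(z s₃ - z s₂) by ring, show y s₂ - y s₃ = -(y s₃ - y s₂) by ring,
      neg_div_neg_eq]
    exact e₂
  rw [eq1, eq2]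
  exact htan
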